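/- Let X* ∈ F. Then X* satisfies the first-order optimality condition ⟨∇f(X*) | X − X*⟩ ≥ 0 for every X ∈ F if and only if ⟨Γ₊(X*) | V₊(X*)⟩ = 0 and ⟨Γ₋(X*) | V₋(X*)⟩ = 0. -/

import Mathlib

set_option autoImplicit false

open Matrix Set Filter

attribute [local instance] Matrix.normedAddCommGroup Matrix.normedSpace

namespace BoxSDP

open scoped Classical

/-- Trace inner product `⟨A|B⟩ = Trace(Aᵀ B)`. -/
noncomputable def mip {m k : Type*} [Fintype m] [Fintype k]
    (A B : Matrix m k ℝ) : ℝ :=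
  (Aᵀ * B).trace

/-- Frobenius norm `‖A‖_F = √⟨A|A⟩`. -/
noncomputable def fnorm {m k : Type*} [Fintype m] [Fintype k]
    (A : Matrix m k ℝ) : ℝ :=
  Real.sqrt (mip A A)

/-- The feasible set `F = {X : O ⪯ X ⪯ I}` (membership forces symmetry). -/
def Feas (n : ℕ) : Set (Matrix (Fin n) (Fin n) ℝ) :=
  {X | X.PosSemidef ∧ (1 - X).PosSemidef}

/-- Square root of a positive semidefinite matrix (junk value `0` otherwise);
agrees with `A^{1/2} = Q K^{1/2} Qᵀ` on positive semidefinite matrices. -/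
noncomputable def psqrt {m : Type*} [Fintype m] [DecidableEq m]
    (A : Matrix m m ℝ) : Matrix m m ℝ :=
  if h : A.PosSemidef then
    (h.1.eigenvectorUnitary : Matrix m m ℝ) * Matrix.diagonal ((↑) ∘ (fun x => √x) ∘ h.1.eigenvalues) *
      (star h.1.eigenvectorUnitary : Matrix m m ℝ)
  else 0

/-- Fourth root `A^{1/4}` of a positive semidefinite matrix. -/
noncomputable def proot4 {m : Type*} [Fintype m] [DecidableEq m]
    (A : Matrix m m ℝ) : Matrix m m ℝ :=
  psqrt (psqrt A)

/-- The 2-norm of a symmetric matrix: its largest absolute eigenvalue. -/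
noncomputable def norm2 {m : Type*} [Fintype m] [DecidableEq m]
    (A : Matrix m m ℝ) : ℝ :=
  if h : A.IsHermitian then sSup (Set.range fun i => |h.eigenvalues i|) else 0

/-- The linear functional `H ↦ ⟨G|H⟩`, as a continuous linear map; a function
`f` has gradient matrix `G` at `X` iff `HasFDerivAt f (gradCLM G) X`. -/
noncomputable def gradCLM {n : ℕ} (G : Matrix (Fin n) (Fin n) ℝ) :
    Matrix (Fin n) (Fin n) ℝ →L[ℝ] ℝ :=
  LinearMap.toContinuousLinearMap
    { toFun := fun H => mip G H
      map_add' := fun x y => by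
        simp [mip, Matrix.mul_add]
      map_smul' := fun c x => by
        simp [mip, Matrix.mul_smul] }

/-- The Hessian bilinear form `⟨A | ∇²f(X) | B⟩` induced by the derivative
`hessOp` of the gradient map. -/
noncomputable def hform {n : ℕ}
    (hessOp : Matrix (Fin n) (Fin n) ℝ →L[ℝ] Matrix (Fin n) (Fin n) ℝ)
    (A B : Matrix (Fin n) (Fin n) ℝ) : ℝ :=
  mip A (hessOp B)

/-- `underline-f`: the minimum of `⟨G | Y − X̂⟩` over `Y ∈ F`. -/
noncomputable def underf {n : ℕ} (G Xh : Matrix (Fin n) (Fin n) ℝ) : ℝ :=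
  sInf ((fun Y => mip G (Y - Xh)) '' Feas n)

/-- First-order optimality condition at `Xs` for gradient matrix `G`. -/
def FirstOrderOpt {n : ℕ} (G Xs : Matrix (Fin n) (Fin n) ℝ) : Prop :=
  ∀ X ∈ Feas n, 0 ≤ mip G (X - Xs)

/-- A fixed eigenvalue decomposition `G = P Γ Pᵀ` of a symmetric matrix `G`,
with eigenvalues in descending order, split into the block `Pp, gp` of
positive eigenvalues and the block `Pm, gm` of nonpositive eigenvalues. -/
structure SpecDecomp (n : ℕ) (G : Matrix (Fin n) (Fin n) ℝ) where
  np : ℕ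
  nm : ℕ
  hdim : np + nm = n
  Pp : Matrix (Fin n) (Fin np) ℝ
  Pm : Matrix (Fin n) (Fin nm) ℝ
  gp : Fin np → ℝ
  gm : Fin nm → ℝ
  hgp_pos : ∀ i, 0 < gp i
  hgm_nonpos : ∀ j, gm j ≤ 0
  hgp_anti : ∀ i j : Fin np, i ≤ j → gp j ≤ gp i
  hgm_anti : ∀ i j : Fin nm, i ≤ j → gm j ≤ gm i
  hPp_orth : Ppᵀ * Pp = 1
  hPm_orth : Pmᵀ * Pm = 1
  hPpPm : Ppᵀ * Pm = 0
  hPPT : Pp * Ppᵀ + Pm * Pmᵀ = 1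
  hG : G = Pp * Matrix.diagonal gp * Ppᵀ + Pm * Matrix.diagonal gm * Pmᵀ

namespace SpecDecomp

variable {n : ℕ} {G : Matrix (Fin n) (Fin n) ℝ}

/-- `V₊(X) = P₊ᵀ X P₊`. -/
def Vp (sd : SpecDecomp n G) (X : Matrix (Fin n) (Fin n) ℝ) :
    Matrix (Fin sd.np) (Fin sd.np) ℝ :=
  sd.Ppᵀ * X * sd.Pp

/-- `V₋(X) = P₋ᵀ (I − X) P₋`. -/
def Vm (sd : SpecDecomp n G) (X : Matrix (Fin n) (Fin n) ℝ) :
    Matrix (Fin sd.nm) (Fin sd.nm) ℝ :=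
  sd.Pmᵀ * (1 - X) * sd.Pm

/-- The search direction `D(X) = P M Pᵀ` with blocks
`M₁₁ = V₊^{1/2} Γ₊ V₊^{1/2}`, `M₁₂ = γ_max P₊ᵀ X P₋`,
`M₂₁ = γ_max P₋ᵀ X P₊`, `M₂₂ = V₋^{1/2} Γ₋ V₋^{1/2}`. -/
noncomputable def Dmat (sd : SpecDecomp n G) (X : Matrix (Fin n) (Fin n) ℝ) :
    Matrix (Fin n) (Fin n) ℝ :=
  sd.Pp * (psqrt (sd.Vp X) * Matrix.diagonal sd.gp * psqrt (sd.Vp X)) * sd.Ppᵀ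
    + norm2 G • (sd.Pp * (sd.Ppᵀ * X * sd.Pm) * sd.Pmᵀ)
    + norm2 G • (sd.Pm * (sd.Pmᵀ * X * sd.Pp) * sd.Ppᵀ)
    + sd.Pm * (psqrt (sd.Vm X) * Matrix.diagonal sd.gm * psqrt (sd.Vm X)) * sd.Pmᵀ

/-- `N(X) = ⟨G | D(X)⟩`. -/
noncomputable def Nval (sd : SpecDecomp n G) (X : Matrix (Fin n) (Fin n) ℝ) : ℝ :=
  mip G (sd.Dmat X)

end SpecDecomp

section Aux
open Matrix
variable {n : ℕ} {G : Matrix (Fin n) (Fin n) ℝ}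

lemma mip_diag {k : Type*} [Fintype k] [DecidableEq k] (d : k → ℝ) (M : Matrix k k ℝ) :
    mip (Matrix.diagonal d) M = ∑ i, d i * M i i := by
  simp [mip, Matrix.trace, Matrix.diag, Matrix.diagonal_mul]

lemma mip_diag_sub {k : Type*} [Fintype k] [DecidableEq k] (d : k → ℝ) (A B : Matrix k k ℝ) :
    mip (Matrix.diagonal d) (A - B)
      = mip (Matrix.diagonal d) A - mip (Matrix.diagonal d) B := by
  simp [mip_diag, Matrix.sub_apply, mul_sub, Finset.sum_sub_distrib]

lemma psd_diag_nonneg {k : Type*} [Fintype k] [DecidableEq k] {M : Matrix k k ℝ}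
    (h : M.PosSemidef) (i : k) : 0 ≤ M i i := by
  simpa [dotProduct, Matrix.mulVec, Pi.single_apply] using h.diag_nonneg (i := i)

lemma psd_conj {k l : Type*} [Fintype k] [Fintype l] {M : Matrix k k ℝ}
    (h : M.PosSemidef) (B : Matrix k l ℝ) : (Bᵀ * M * B).PosSemidef := by
  simpa [Matrix.conjTranspose_eq_transpose_of_trivial] using h.conjTranspose_mul_mul_same B

lemma mip_diag_nonneg {k : Type*} [Fintype k] [DecidableEq k] {d : k → ℝ} {M : Matrix k k ℝ}
    (hd : ∀ i, 0 ≤ d i) (hM : M.PosSemidef) : 0 ≤ mip (Matrix.diagonal d) M := by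
  rw [mip_diag]
  exact Finset.sum_nonneg fun i _ => mul_nonneg (hd i) (psd_diag_nonneg hM i)

lemma mip_diag_nonpos {k : Type*} [Fintype k] [DecidableEq k] {d : k → ℝ} {M : Matrix k k ℝ}
    (hd : ∀ i, d i ≤ 0) (hM : M.PosSemidef) : mip (Matrix.diagonal d) M ≤ 0 := by
  rw [mip_diag]
  exact Finset.sum_nonpos fun i _ => mul_nonpos_of_nonpos_of_nonneg (hd i) (psd_diag_nonneg hM i)

lemma trace_conj {k l : Type*} [Fintype k] [Fintype l]
    (P : Matrix l k ℝ) (D : Matrix k k ℝ) (Y : Matrix l l ℝ) :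
    (P * D * Pᵀ * Y).trace = (D * (Pᵀ * Y * P)).trace := by
  rw [Matrix.mul_assoc, Matrix.trace_mul_cycle, Matrix.trace_mul_comm]

lemma mip_key (sd : SpecDecomp n G) (Y : Matrix (Fin n) (Fin n) ℝ) :
    mip G Y = mip (Matrix.diagonal sd.gp) (sd.Ppᵀ * Y * sd.Pp)
      + mip (Matrix.diagonal sd.gm) (sd.Pmᵀ * Y * sd.Pm) := by
  have hGs : Gᵀ = G := by
    rw [sd.hG]
    simp [Matrix.transpose_mul, Matrix.mul_assoc]
  unfold mip
  rw [hGs]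
  conv_lhs => rw [sd.hG]
  rw [Matrix.add_mul, Matrix.trace_add, trace_conj, trace_conj]
  simp [Matrix.diagonal_transpose]

lemma hkey (sd : SpecDecomp n G) (Xs : Matrix (Fin n) (Fin n) ℝ)
    (Y : Matrix (Fin n) (Fin n) ℝ) :
    mip G (Y - Xs) = mip (Matrix.diagonal sd.gp) (sd.Ppᵀ * Y * sd.Pp)
      - mip (Matrix.diagonal sd.gp) (sd.Vp Xs)
      + (mip (Matrix.diagonal sd.gm) (sd.Vm Xs)
        - mip (Matrix.diagonal sd.gm) (sd.Pmᵀ * (1 - Y) * sd.Pm)) := by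
  rw [mip_key sd]
  have h1 : sd.Ppᵀ * (Y - Xs) * sd.Pp = sd.Ppᵀ * Y * sd.Pp - sd.Vp Xs := by
    simp [SpecDecomp.Vp, Matrix.mul_sub, Matrix.sub_mul]
  have hYX : Y - Xs = (1 - Xs) - (1 - Y) := by abel
  have h2 : sd.Pmᵀ * (Y - Xs) * sd.Pm
      = sd.Vm Xs - sd.Pmᵀ * (1 - Y) * sd.Pm := by
    rw [hYX]
    simp [SpecDecomp.Vm, Matrix.mul_sub, Matrix.sub_mul]
  rw [h1, h2, mip_diag_sub, mip_diag_sub]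

end Aux

theorem first_order_iff_inner_gamma_V_zero {n : ℕ}
    (f : Matrix (Fin n) (Fin n) ℝ → ℝ)
    (grad : Matrix (Fin n) (Fin n) ℝ → Matrix (Fin n) (Fin n) ℝ)
    (hgradsym : ∀ X ∈ Feas n, (grad X).IsSymm)
    (hgrad : ∀ X ∈ Feas n, HasFDerivAt f (gradCLM (grad X)) X)
    (Xs : Matrix (Fin n) (Fin n) ℝ) (hXs : Xs ∈ Feas n)
    (sd : SpecDecomp n (grad Xs)) :
    FirstOrderOpt (grad Xs) Xs ↔
      (mip (Matrix.diagonal sd.gp) (sd.Vp Xs) = 0 ∧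
        mip (Matrix.diagonal sd.gm) (sd.Vm Xs) = 0) := by
  have hVpPsd : (sd.Vp Xs).PosSemidef := psd_conj hXs.1 sd.Pp
  have hVmPsd : (sd.Vm Xs).PosSemidef := psd_conj hXs.2 sd.Pm
  have hp_nonneg : 0 ≤ mip (Matrix.diagonal sd.gp) (sd.Vp Xs) :=
    mip_diag_nonneg (fun i => (sd.hgp_pos i).le) hVpPsd
  have hm_nonpos : mip (Matrix.diagonal sd.gm) (sd.Vm Xs) ≤ 0 :=
    mip_diag_nonpos sd.hgm_nonpos hVmPsd
  constructor
  · intro hFO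
    -- test point X = Pm * Pmᵀ
    have hfeas : sd.Pm * sd.Pmᵀ ∈ Feas n := by
      constructor
      · simpa [Matrix.conjTranspose_eq_transpose_of_trivial] using
          Matrix.posSemidef_self_mul_conjTranspose sd.Pm
      · have : (1 : Matrix (Fin n) (Fin n) ℝ) - sd.Pm * sd.Pmᵀ = sd.Pp * sd.Ppᵀ := by
          rw [← sd.hPPT]; abel
        rw [this]
        simpa [Matrix.conjTranspose_eq_transpose_of_trivial] using
          Matrix.posSemidef_self_mul_conjTranspose sd.Pp
    have h0 := hFO _ hfeas
    rw [hkey sd Xs] at h0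
    have e1 : sd.Ppᵀ * (sd.Pm * sd.Pmᵀ) * sd.Pp = 0 := by
      rw [← Matrix.mul_assoc, sd.hPpPm, Matrix.zero_mul, Matrix.zero_mul]
    have e2 : sd.Pmᵀ * (1 - sd.Pm * sd.Pmᵀ) * sd.Pm = 0 := by
      rw [Matrix.mul_sub, Matrix.mul_one, ← Matrix.mul_assoc, sd.hPm_orth,
        Matrix.one_mul, sub_self, Matrix.zero_mul]
    rw [e1, e2] at h0
    have hz : mip (Matrix.diagonal sd.gp) (0 : Matrix (Fin sd.np) (Fin sd.np) ℝ) = 0 := by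
      simp [mip_diag]
    have hz' : mip (Matrix.diagonal sd.gm) (0 : Matrix (Fin sd.nm) (Fin sd.nm) ℝ) = 0 := by
      simp [mip_diag]
    rw [hz, hz'] at h0
    constructor <;> linarith
  · rintro ⟨hp, hm⟩ X hX
    rw [hkey sd Xs, hp, hm]
    have h1 : 0 ≤ mip (Matrix.diagonal sd.gp) (sd.Ppᵀ * X * sd.Pp) :=
      mip_diag_nonneg (fun i => (sd.hgp_pos i).le) (psd_conj hX.1 sd.Pp)
    have h2 : mip (Matrix.diagonal sd.gm) (sd.Pmᵀ * (1 - X) * sd.Pm) ≤ 0 :=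
      mip_diag_nonpos sd.hgm_nonpos (psd_conj hX.2 sd.Pm)
    linarith


end BoxSDP
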